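/- Case k = 3 of the tree puzzle: for all positive integers n, p_1, p_2, p_3, the number of triples ((i,j),(R_1,…,R_n)) with i,j ∈ [n] and (R_1,…,R_n) ∈ M^n_{p_1,p_2,p_3} such that the graph α((i,j),(R_1,…,R_n)) on the three vertices {1,2,3} is a tree equals n^2 times the number of tuples (R_1,…,R_n) ∈ M^n_{p_1,p_2,p_3} with |R_1| = 2. -/

import Mathlib

open Finset

/-- A `(p 0, …, p (k-1))`-colored factorization of the cycle `(1,2,…,n)` (encoded as
`finRotate n` on `Fin n`): permutations `π t` whose product (in order) is the long cycle,
together with surjective colorings `φ t : Fin n → Fin (p t)` constant on cycles of `π t`. -/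
def IsColoredFact {n k : ℕ} (p : Fin k → ℕ)
    (x : (Fin k → Equiv.Perm (Fin n)) × ((t : Fin k) → Fin n → Fin (p t))) : Prop :=
  (List.ofFn x.1).prod = finRotate n ∧
  (∀ t, Function.Surjective (x.2 t)) ∧
  ∀ t a b, (x.1 t).SameCycle a b → x.2 t a = x.2 t b

/-- `C^n_{p_1,…,p_k}`: the number of colored factorizations. -/
noncomputable def Ccard (n k : ℕ) (p : Fin k → ℕ) : ℕ :=
  Nat.card {x : (Fin k → Equiv.Perm (Fin n)) × ((t : Fin k) → Fin n → Fin (p t)) //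
    IsColoredFact p x}

/-- Membership in `M^n_{p_1,…,p_k}`: a tuple of strict subsets of `Fin k` such that each
`t` lies in exactly `p t` of the subsets. -/
def InM {k n : ℕ} (p : Fin k → ℕ) (R : Fin n → Finset (Fin k)) : Prop :=
  (∀ i, R i ≠ Finset.univ) ∧ ∀ t, (Finset.univ.filter fun i => t ∈ R i).card = p t

/-- `M^m_{p_1,…,p_k}`: the number of such tuples. -/
noncomputable def Mcard (k m : ℕ) (p : Fin k → ℕ) : ℕ :=
  Nat.card {R : Fin m → Finset (Fin k) // InM p R}

/-- The map `α(t,R)` (vertices of `[k]` are `0`-indexed as `Fin k`): `α(t,R) = t-1` if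
`t ∈ R`, and `α(t,R) = t+r` where `r ≥ 0` is largest with `t+1,…,t+r ∈ R` otherwise. -/
def alpha {k : ℕ} [NeZero k] (t : Fin k) (R : Finset (Fin k)) : Fin k :=
  if t ∈ R then t - 1
  else t + Fin.ofNat k (Nat.findGreatest (fun r => ∀ s ∈ Finset.Icc 1 r, t + Fin.ofNat k s ∈ R) (k - 1) : ℕ)

/-- The edges `e_t = {t, α(t, R_{i_t})}`, `t` ranging over the first `k-1` vertices. -/
def treeEdges {k n : ℕ} [NeZero k] (idx : Fin (k - 1) → Fin n) (R : Fin n → Finset (Fin k))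
    (t : Fin (k - 1)) : Sym2 (Fin k) :=
  s(Fin.castLE (Nat.sub_le k 1) t, alpha (Fin.castLE (Nat.sub_le k 1) t) (R (idx t)))

/-- The graph `α((i_1,…,i_{k-1}), (R_1,…,R_n))` is a tree: its `k-1` edges are loopless,
pairwise distinct (as unordered pairs) and the resulting graph on `Fin k` is connected. -/
def IsTreeGraph {k n : ℕ} [NeZero k] (idx : Fin (k - 1) → Fin n)
    (R : Fin n → Finset (Fin k)) : Prop :=
  (∀ t : Fin (k - 1), Fin.castLE (Nat.sub_le k 1) t ≠ alpha (Fin.castLE (Nat.sub_le k 1) t) (R (idx t))) ∧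
  Function.Injective (treeEdges idx R) ∧
  (SimpleGraph.fromEdgeSet (Set.range (treeEdges idx R))).Connected

/-- The number of cycles (including fixed points) of a permutation. -/
def cycleCount {n : ℕ} (π : Equiv.Perm (Fin n)) : ℕ :=
  π.cycleType.card + (Finset.univ.filter fun a => π a = a).card

/-- Colored factorizations with prescribed color-compositions `γ`. -/
noncomputable def cColoredCard (n k : ℕ) (p : Fin k → ℕ) (γ : (t : Fin k) → Fin (p t) → ℕ) : ℕ :=
  Nat.card {x : (Fin k → Equiv.Perm (Fin n)) × ((t : Fin k) → Fin n → Fin (p t)) //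
    IsColoredFact p x ∧ ∀ t i, (Finset.univ.filter fun a => x.2 t a = i).card = γ t i}

/-- `N_{A×B}`: number of triples `(i,j,R)` with `R ∈ M^n_{p_1,p_2,p_3}`, `A ⊆ R i`, `B ⊆ R j`. -/
noncomputable def Ncard (n : ℕ) (p : Fin 3 → ℕ) (A B : Finset (Fin 3)) : ℕ :=
  Nat.card {x : Fin n × Fin n × (Fin n → Finset (Fin 3)) //
    InM p x.2.2 ∧ A ⊆ x.2.2 x.1 ∧ B ⊆ x.2.2 x.2.1}

/-! ### Auxiliary material for `tree_puzzle_k3` -/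

/-- The tree condition for `k = 3`, expressed on the pair `(R i, R j)`. -/
def Tcond (a b : Finset (Fin 3)) : Prop :=
  (0 : Fin 3) ≠ alpha 0 a ∧ (1 : Fin 3) ≠ alpha 1 b ∧
    s((0:Fin 3), alpha 0 a) ≠ s((1:Fin 3), alpha 1 b)

instance (a b : Finset (Fin 3)) : Decidable (Tcond a b) := by
  unfold Tcond; infer_instance

lemma conn3 {G : SimpleGraph (Fin 3)} {x y z : Fin 3} (h1 : G.Adj x y) (h2 : G.Adj y z)
    (hcov : ∀ w : Fin 3, w = x ∨ w = y ∨ w = z) : G.Connected := by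
  rw [SimpleGraph.connected_iff_exists_forall_reachable]
  refine ⟨y, fun w => ?_⟩
  rcases hcov w with h | h | h <;> subst h
  · exact h1.symm.reachable
  · exact SimpleGraph.Reachable.refl _
  · exact h2.reachable

lemma isTree_iff {n : ℕ} (idx : Fin (3-1) → Fin n) (R : Fin n → Finset (Fin 3)) :
    IsTreeGraph idx R ↔ Tcond (R (idx 0)) (R (idx 1)) := by
  have e0 : treeEdges idx R 0 = s((0:Fin 3), alpha 0 (R (idx 0))) := rfl
  have e1 : treeEdges idx R 1 = s((1:Fin 3), alpha 1 (R (idx 1))) := rfl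
  constructor
  · rintro ⟨h1, h2, -⟩
    refine ⟨h1 0, h1 1, fun h => ?_⟩
    have : (0 : Fin (3-1)) = 1 := h2 (by rw [e0, e1]; exact h)
    exact absurd this (by decide)
  · rintro ⟨hx, hy, hne⟩
    have G := SimpleGraph.fromEdgeSet (Set.range (treeEdges idx R))
    refine ⟨?_, ?_, ?_⟩
    · intro t
      fin_cases t
      · exact hx
      · exact hy
    · intro t s h
      fin_cases t <;> fin_cases s
      · rfl
      · exact absurd (e0 ▸ e1 ▸ h) hne
      · exact absurd (e0 ▸ e1 ▸ h.symm) hne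
      · rfl
    · have adj0 : (SimpleGraph.fromEdgeSet (Set.range (treeEdges idx R))).Adj 0
          (alpha 0 (R (idx 0))) :=
        (SimpleGraph.fromEdgeSet_adj _).2 ⟨⟨0, e0.symm⟩, hx⟩
      have adj1 : (SimpleGraph.fromEdgeSet (Set.range (treeEdges idx R))).Adj 1
          (alpha 1 (R (idx 1))) :=
        (SimpleGraph.fromEdgeSet_adj _).2 ⟨⟨1, e1.symm⟩, hy⟩
      have hx2 : alpha 0 (R (idx 0)) = 1 ∨ alpha 0 (R (idx 0)) = 2 := by
        have : ∀ v : Fin 3, (0:Fin 3) ≠ v → v = 1 ∨ v = 2 := by decide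
        exact this _ hx
      have hy2 : alpha 1 (R (idx 1)) = 0 ∨ alpha 1 (R (idx 1)) = 2 := by
        have : ∀ v : Fin 3, (1:Fin 3) ≠ v → v = 0 ∨ v = 2 := by decide
        exact this _ hy
      rcases hx2 with hx2 | hx2 <;> rcases hy2 with hy2 | hy2 <;>
          rw [hx2] at adj0 <;> rw [hy2] at adj1
      · exact absurd (by rw [hx2, hy2]; exact Sym2.eq_swap) hne
      · exact conn3 adj0 adj1 (by decide)
      · exact conn3 adj0.symm adj1.symm (by decide)
      · exact conn3 adj0 adj1.symm (by decide)

/-- The fiberwise matching between tree pairs and `|R i| = 2` pairs. -/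
def gmatch : Finset (Fin 3) × Finset (Fin 3) → Finset (Fin 3) × Finset (Fin 3) := fun x =>
  if x = ({0}, {1}) then ({0,1}, ∅)
  else if x = ({0,1}, ∅) then ({0}, {1})
  else if x = ({0}, {0,1}) then ({0,1}, {0})
  else if x = ({0,1}, {0}) then ({0}, {0,1})
  else if x = ({0}, {2}) then ({0,2}, ∅)
  else if x = ({0,2}, ∅) then ({0}, {2})
  else if x = ({0}, {0,2}) then ({0,2}, {0})
  else if x = ({0,2}, {0}) then ({0}, {0,2})
  else if x = ({0}, {1,2}) then ({1,2}, {0})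
  else if x = ({1,2}, {0}) then ({0}, {1,2})
  else if x = ({1}, {2}) then ({1,2}, ∅)
  else if x = ({1,2}, ∅) then ({1}, {2})
  else x

lemma ginv : ∀ x, gmatch (gmatch x) = x := by decide

lemma gcol : ∀ a b : Finset (Fin 3), ∀ t : Fin 3,
    ((if t ∈ (gmatch (a,b)).1 then 1 else 0) + (if t ∈ (gmatch (a,b)).2 then 1 else 0) : ℕ) =
    (if t ∈ a then 1 else 0) + (if t ∈ b then 1 else 0) := by decide

lemma gstrict : ∀ a b : Finset (Fin 3), a ≠ Finset.univ → b ≠ Finset.univ →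
    (gmatch (a,b)).1 ≠ Finset.univ ∧ (gmatch (a,b)).2 ≠ Finset.univ := by decide

lemma gT : ∀ a b : Finset (Fin 3), a ≠ Finset.univ → b ≠ Finset.univ →
    (Tcond a b ↔ ((gmatch (a,b)).1).card = 2) := by decide

lemma gT2 : ∀ a b : Finset (Fin 3), a ≠ Finset.univ → b ≠ Finset.univ →
    (a.card = 2 ↔ Tcond (gmatch (a,b)).1 (gmatch (a,b)).2) := by decide

lemma gdiag : ∀ a : Finset (Fin 3), a ≠ Finset.univ → (Tcond a a ↔ a.card = 2) := by decide

/-- Apply the matching `gmatch` at coordinates `i` and `j`. -/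
def applyG {n : ℕ} (i j : Fin n) (R : Fin n → Finset (Fin 3)) : Fin n → Finset (Fin 3) :=
  Function.update (Function.update R i (gmatch (R i, R j)).1) j (gmatch (R i, R j)).2

section applyG
variable {n : ℕ} {i j : Fin n}

lemma applyG_fst (hij : i ≠ j) {R : Fin n → Finset (Fin 3)} :
    applyG i j R i = (gmatch (R i, R j)).1 := by
  rw [applyG, Function.update_of_ne hij, Function.update_self]

lemma applyG_snd {R : Fin n → Finset (Fin 3)} :
    applyG i j R j = (gmatch (R i, R j)).2 := by
  rw [applyG, Function.update_self]

lemma applyG_other {R : Fin n → Finset (Fin 3)} {x : Fin n} (hxi : x ≠ i) (hxj : x ≠ j) :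
    applyG i j R x = R x := by
  rw [applyG, Function.update_of_ne hxj, Function.update_of_ne hxi]

lemma applyG_invol (hij : i ≠ j) {R : Fin n → Finset (Fin 3)} :
    applyG i j (applyG i j R) = R := by
  funext x
  by_cases hxi : x = i
  · subst hxi
    rw [applyG_fst hij, applyG_fst hij, applyG_snd, Prod.mk.eta, ginv]
  · by_cases hxj : x = j
    · subst hxj
      rw [applyG_snd, applyG_fst hij, applyG_snd, Prod.mk.eta, ginv]
    · rw [applyG_other hxi hxj, applyG_other hxi hxj]

lemma sum_eq_two (hij : i ≠ j) {f f' : Fin n → ℕ}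
    (h : ∀ x, x ≠ i → x ≠ j → f' x = f x) (h2 : f' i + f' j = f i + f j) :
    ∑ x, f' x = ∑ x, f x := by
  have key : ∀ F : Fin n → ℕ,
      ∑ x, F x = ∑ x ∈ ({i,j} : Finset (Fin n))ᶜ, F x + (F i + F j) := by
    intro F
    rw [← Finset.sum_compl_add_sum ({i,j} : Finset (Fin n)) F, Finset.sum_pair hij]
  rw [key f', key f, h2]
  congr 1
  refine Finset.sum_congr rfl fun x hx => ?_
  simp only [Finset.mem_compl, Finset.mem_insert, Finset.mem_singleton, not_or] at hx
  exact h x hx.1 hx.2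

lemma InM_applyG (hij : i ≠ j) {p : Fin 3 → ℕ} {R : Fin n → Finset (Fin 3)}
    (h : InM p R) : InM p (applyG i j R) := by
  constructor
  · intro x
    by_cases hxi : x = i
    · subst hxi; rw [applyG_fst hij]; exact (gstrict _ _ (h.1 _) (h.1 _)).1
    · by_cases hxj : x = j
      · subst hxj; rw [applyG_snd]; exact (gstrict _ _ (h.1 _) (h.1 _)).2
      · rw [applyG_other hxi hxj]; exact h.1 x
  · intro t
    rw [← h.2 t, Finset.card_filter, Finset.card_filter]
    refine sum_eq_two hij ?_ ?_
    · intro x hxi hxj; rw [applyG_other hxi hxj]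
    · rw [applyG_fst hij, applyG_snd]; exact gcol (R i) (R j) t

end applyG

/-- The bijection between tree tuples and `|R i| = 2` tuples, for `i ≠ j`. -/
def equivG {n : ℕ} {p : Fin 3 → ℕ} {i j : Fin n} (hij : i ≠ j) :
    {R : Fin n → Finset (Fin 3) // InM p R ∧ Tcond (R i) (R j)} ≃
    {R : Fin n → Finset (Fin 3) // InM p R ∧ (R i).card = 2} where
  toFun x := ⟨applyG i j x.1, InM_applyG hij x.2.1, by
    rw [applyG_fst hij]
    exact (gT _ _ (x.2.1.1 i) (x.2.1.1 j)).1 x.2.2⟩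
  invFun x := ⟨applyG i j x.1, InM_applyG hij x.2.1, by
    rw [applyG_fst hij, applyG_snd]
    exact (gT2 _ _ (x.2.1.1 i) (x.2.1.1 j)).1 x.2.2⟩
  left_inv x := Subtype.ext (applyG_invol hij)
  right_inv x := Subtype.ext (applyG_invol hij)

lemma InM_comp {n : ℕ} {p : Fin 3 → ℕ} (σ : Equiv.Perm (Fin n))
    {R : Fin n → Finset (Fin 3)} (h : InM p R) : InM p (R ∘ σ) := by
  refine ⟨fun x => h.1 (σ x), fun t => ?_⟩
  rw [← h.2 t]
  exact Finset.card_equiv σ (by simp)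

/-- Relabel coordinates by a swap, moving the distinguished coordinate. -/
def swapEquiv {n : ℕ} {p : Fin 3 → ℕ} (z i : Fin n) :
    {R : Fin n → Finset (Fin 3) // InM p R ∧ (R i).card = 2} ≃
    {R : Fin n → Finset (Fin 3) // InM p R ∧ (R z).card = 2} where
  toFun x := ⟨x.1 ∘ Equiv.swap z i, InM_comp _ x.2.1, by
    simpa [Equiv.swap_apply_left] using x.2.2⟩
  invFun x := ⟨x.1 ∘ Equiv.swap z i, InM_comp _ x.2.1, by
    simpa [Equiv.swap_apply_left] using x.2.2⟩
  left_inv x := Subtype.ext (by funext y; simp [Equiv.swap_apply_self])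
  right_inv x := Subtype.ext (by funext y; simp [Equiv.swap_apply_self])

/-- The fiberwise equivalence, for any choice of the two indices. -/
def fiberEquiv {n : ℕ} (p : Fin 3 → ℕ) (hn : 0 < n) (idx : Fin (3-1) → Fin n) :
    {R : Fin n → Finset (Fin 3) // InM p R ∧ IsTreeGraph idx R} ≃
    {R : Fin n → Finset (Fin 3) // InM p R ∧ (R ⟨0, hn⟩).card = 2} := by
  refine (Equiv.subtypeEquivRight fun R => and_congr_right fun _ => isTree_iff idx R).trans
    (Equiv.trans ?_ (swapEquiv ⟨0, hn⟩ (idx 0)))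
  by_cases h : idx 0 = idx 1
  · refine Equiv.subtypeEquivRight fun R => and_congr_right fun hM => ?_
    rw [← h]
    exact gdiag (R (idx 0)) (hM.1 (idx 0))
  · exact equivG h

theorem tree_puzzle_k3 (n p₁ p₂ p₃ : ℕ) (hn : 0 < n) (hp₁ : 0 < p₁) (hp₂ : 0 < p₂) (hp₃ : 0 < p₃) :
    Nat.card {B : (Fin 2 → Fin n) × (Fin n → Finset (Fin 3)) //
        InM ![p₁, p₂, p₃] B.2 ∧ IsTreeGraph B.1 B.2} =
    n ^ 2 * Nat.card {R : Fin n → Finset (Fin 3) //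
        InM ![p₁, p₂, p₃] R ∧ (R ⟨0, hn⟩).card = 2} := by
  have E : {B : (Fin 2 → Fin n) × (Fin n → Finset (Fin 3)) //
        InM ![p₁, p₂, p₃] B.2 ∧ IsTreeGraph B.1 B.2} ≃
      (Fin 2 → Fin n) × {R : Fin n → Finset (Fin 3) //
        InM ![p₁, p₂, p₃] R ∧ (R ⟨0, hn⟩).card = 2} :=
    (Equiv.subtypeProdEquivSigmaSubtype fun idx R => InM ![p₁, p₂, p₃] R ∧
        IsTreeGraph idx R).trans
      ((Equiv.sigmaCongrRight fun idx => fiberEquiv ![p₁, p₂, p₃] hn idx).trans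
        (Equiv.sigmaEquivProd _ _))
  rw [Nat.card_congr E, Nat.card_prod, Nat.card_fun]
  simp [Nat.card_eq_fintype_card, sq]
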